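/- Consider the equation E : 2x − 2y + z = 0 over [n], and define the coloring f : [n] → {−1, 1} by f(t) = −1 if t is even and t ≤ 3n/4, and f(t) = 1 otherwise. Then the total number of solutions in [n]³ is (3/8)n² + O(n), the number of monochromatic solutions under f is (5/64)n² + O(n), and consequently limsup_{n→∞} μ_E([n]) ≤ 5/24 < 1/4, so E is uncommon over [n]. -/

import Mathlib

open Finset Filter

/-- The set of solutions `(x, y, z) ∈ [n]³` to `a·x + b·y + c·z = 0`. -/
def solns (a b c : ℤ) (n : ℕ) : Finset (ℕ × ℕ × ℕ) :=
  ((Finset.Icc 1 n) ×ˢ (Finset.Icc 1 n) ×ˢ (Finset.Icc 1 n)).filter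
    fun p => a * (p.1 : ℤ) + b * (p.2.1 : ℤ) + c * (p.2.2 : ℤ) = 0

/-- The set of solutions that are monochromatic under the coloring `f`. -/
def mono (a b c : ℤ) (n : ℕ) (f : ℕ → Bool) : Finset (ℕ × ℕ × ℕ) :=
  (solns a b c n).filter fun p => f p.1 = f p.2.1 ∧ f p.1 = f p.2.2

/-- `μ_E([n])`: the minimum, over 2-colorings of `[n]`, of the proportion of
monochromatic solutions. -/
noncomputable def muMin (a b c : ℤ) (n : ℕ) : ℝ :=
  sInf {r : ℝ | ∃ f : ℕ → Bool,
    r = ((mono a b c n f).card : ℝ) / ((solns a b c n).card : ℝ)}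

/-- The coloring of `[n]` for `2x − 2y + z = 0`: `t` is blue (`false`, i.e. `−1`)
iff `t` is even and `t ≤ 3n/4`, red (`true`, i.e. `1`) otherwise. -/
def color1 (n : ℕ) : ℕ → Bool := fun t =>
  if t % 2 = 0 ∧ 4 * t ≤ 3 * n then false else true

/-! ### Auxiliary counting lemmas -/

lemma aux_Icc_succ (k : ℕ) : Finset.Icc 1 (k+1) = insert (k+1) (Finset.Icc 1 k) := by
  ext x; simp [Finset.mem_Icc]; omega

lemma aux_evenCount (M : ℕ) : ((Icc 1 M).filter (fun x => x % 2 = 0)).card = M/2 := by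
  induction M with
  | zero => simp
  | succ k ih =>
    rw [aux_Icc_succ, Finset.filter_insert]
    split_ifs with h
    · rw [Finset.card_insert_of_notMem (by simp [Finset.mem_Icc])]; omega
    · omega

lemma aux_oddCountIoc (L M : ℕ) (h : L ≤ M) :
    ((Icc 1 M).filter (fun x => x % 2 = 1 ∧ L < x)).card = (M+1)/2 - (L+1)/2 := by
  induction M, h using Nat.le_induction with
  | base =>
    have : ((Icc 1 L).filter (fun x => x % 2 = 1 ∧ L < x)) = ∅ := by
      apply Finset.filter_false_of_mem; intro x hx; simp [Finset.mem_Icc] at hx ⊢; omega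
    rw [this]; simp
  | succ M hM ih =>
    rw [aux_Icc_succ, Finset.filter_insert]
    split_ifs with h
    · rw [Finset.card_insert_of_notMem (by simp [Finset.mem_Icc])]; omega
    · omega

lemma aux_oddCount (M : ℕ) : ((Icc 1 M).filter (fun x => x % 2 = 1)).card = (M+1)/2 := by
  induction M with
  | zero => simp
  | succ k ih =>
    rw [aux_Icc_succ, Finset.filter_insert]
    split_ifs with h
    · rw [Finset.card_insert_of_notMem (by simp [Finset.mem_Icc])]; omega
    · omega

lemma aux_gaussR (m : ℕ) : ∑ d ∈ Icc 1 m, (d:ℝ) = m*(m+1)/2 := by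
  induction m with
  | zero => simp
  | succ k ih => rw [Finset.sum_Icc_succ_top (by omega)]; rw [ih]; push_cast; ring

lemma aux_evenImage (m : ℕ) : (Icc 1 m).filter (fun d => d % 2 = 0)
    = (Icc 1 (m/2)).image (fun e => 2*e) := by
  ext x
  simp only [Finset.mem_filter, Finset.mem_Icc, Finset.mem_image]
  constructor
  · intro h; exact ⟨x/2, by omega, by omega⟩
  · rintro ⟨e, he, rfl⟩; omega

/-! ### Decomposition of the solution set -/

lemma aux_card_filter_solns (n : ℕ) (P : ℕ × ℕ × ℕ → Prop) [DecidablePred P] :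
    ((solns 2 (-2) 1 n).filter P).card
      = ∑ d ∈ Icc 1 (n/2), ((Icc 1 (n-d)).filter (fun x => P (x, x+d, 2*d))).card := by
  rw [← Finset.card_sigma]
  apply Finset.card_nbij' (i := fun p => ⟨p.2.2/2, p.1⟩)
    (j := fun q => (q.2, q.2 + q.1, 2*q.1))
  · rintro ⟨x, y, z⟩ hp
    simp only [Finset.mem_coe, Finset.mem_filter, solns, Finset.mem_product, Finset.mem_Icc] at hp
    obtain ⟨⟨⟨⟨hx1,hx2⟩,⟨hy1,hy2⟩,hz1,hz2⟩, heq⟩, hP⟩ := hp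
    have heq' : (z:ℤ) = 2*(y:ℤ) - 2*(x:ℤ) := by linarith
    have hkey : ((x, x + z/2, 2*(z/2)) : ℕ × ℕ × ℕ) = (x, y, z) := by
      simp only [Prod.mk.injEq, true_and]; omega
    simp only [Finset.mem_coe, Finset.mem_sigma, Finset.mem_filter, Finset.mem_Icc]
    refine ⟨⟨by omega, by omega⟩, ⟨by omega, by omega⟩, ?_⟩
    rw [hkey]; exact hP
  · rintro ⟨d, x⟩ hq
    simp only [Finset.mem_coe, Finset.mem_sigma, Finset.mem_filter, Finset.mem_Icc] at hq
    obtain ⟨⟨hd1, hd2⟩, ⟨hx1, hx2⟩, hP⟩ := hq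
    simp only [Finset.mem_coe, Finset.mem_filter, solns, Finset.mem_product, Finset.mem_Icc]
    refine ⟨⟨⟨⟨by omega, by omega⟩, ⟨by omega, by omega⟩, by omega, by omega⟩,
      by push_cast; ring⟩, hP⟩
  · rintro ⟨x, y, z⟩ hp
    simp only [Finset.mem_coe, Finset.mem_filter, solns, Finset.mem_product, Finset.mem_Icc] at hp
    obtain ⟨⟨⟨⟨hx1,hx2⟩,⟨hy1,hy2⟩,hz1,hz2⟩, heq⟩, hP⟩ := hp
    have heq' : (z:ℤ) = 2*(y:ℤ) - 2*(x:ℤ) := by linarith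
    have h1 : x + z/2 = y := by omega
    have h2 : 2*(z/2) = z := by omega
    simp [h1, h2]
  · rintro ⟨d, x⟩ hq
    simp only [Finset.mem_coe, Finset.mem_sigma, Finset.mem_filter, Finset.mem_Icc] at hq
    have h2 : 2 * d / 2 = d := by omega
    simp only [h2]

/-! ### The per-difference counts for the coloring `color1` -/

lemma aux_color1_cond_iff (n d x : ℕ) :
    (color1 n x = color1 n (x+d) ∧ color1 n x = color1 n (2*d)) ↔
    (((x%2=0 ∧ 4*x ≤ 3*n) ↔ ((x+d)%2=0 ∧ 4*(x+d) ≤ 3*n)) ∧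
     ((x%2=0 ∧ 4*x ≤ 3*n) ↔ (8*d ≤ 3*n))) := by
  unfold color1
  split_ifs with h1 h2 h3 h2 h3 h3 h3 <;> simp_all <;> omega

/-- The number of monochromatic solutions with difference `d`. -/
def cD (n d : ℕ) : ℕ :=
  ((Icc 1 (n-d)).filter
    (fun x => color1 n x = color1 n (x+d) ∧ color1 n x = color1 n (2*d))).card

lemma aux_cBlueEven (n d : ℕ) (h8 : 8*d ≤ 3*n) (he : d % 2 = 0) :
    cD n d = (3*n/4 - d)/2 := by
  unfold cD
  have hset : ((Icc 1 (n-d)).filter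
      (fun x => color1 n x = color1 n (x+d) ∧ color1 n x = color1 n (2*d)))
      = (Icc 1 (3*n/4 - d)).filter (fun x => x % 2 = 0) := by
    ext x
    simp only [Finset.mem_filter, Finset.mem_Icc, aux_color1_cond_iff]
    omega
  rw [hset, aux_evenCount]

lemma aux_cBlueOdd (n d : ℕ) (h8 : 8*d ≤ 3*n) (he : d % 2 = 1) :
    cD n d = 0 := by
  unfold cD
  rw [Finset.card_eq_zero]
  apply Finset.filter_false_of_mem
  intro x hx
  simp only [Finset.mem_Icc] at hx
  rw [aux_color1_cond_iff]
  omega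

lemma aux_cRedEven (n d : ℕ) (h8 : 3*n < 8*d) (hd : 2*d ≤ n) (he : d % 2 = 0) :
    cD n d = (n-d+1)/2 := by
  unfold cD
  have hset : ((Icc 1 (n-d)).filter
      (fun x => color1 n x = color1 n (x+d) ∧ color1 n x = color1 n (2*d)))
      = (Icc 1 (n-d)).filter (fun x => x % 2 = 1) := by
    ext x
    simp only [Finset.mem_filter, Finset.mem_Icc, aux_color1_cond_iff]
    omega
  rw [hset, aux_oddCount]

lemma aux_cRedOdd (n d : ℕ) (h8 : 3*n < 8*d) (hd : 2*d ≤ n) (he : d % 2 = 1) :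
    cD n d = (n-d+1)/2 - (3*n/4-d+1)/2 := by
  unfold cD
  have hset : ((Icc 1 (n-d)).filter
      (fun x => color1 n x = color1 n (x+d) ∧ color1 n x = color1 n (2*d)))
      = (Icc 1 (n-d)).filter (fun x => x % 2 = 1 ∧ (3*n/4 - d) < x) := by
    ext x
    simp only [Finset.mem_filter, Finset.mem_Icc, aux_color1_cond_iff]
    omega
  rw [hset, aux_oddCountIoc _ _ (by omega)]

/-! ### The approximating function τ and its estimates -/

noncomputable def tauF (n : ℕ) : ℕ → ℝ := fun d =>
  if 8*d ≤ 3*n then (if d % 2 = 0 then ((3*(n:ℝ) - 4*d)/8) else 0)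
  else (if d % 2 = 0 then ((n:ℝ)-(d:ℝ))/2 else (n:ℝ)/8)

lemma aux_term_bound (n : ℕ) (d : ℕ) (hd1 : 1 ≤ d) (hd2 : d ≤ n/2) :
    |(cD n d : ℝ) - tauF n d| ≤ 3 := by
  unfold tauF
  rcases le_or_gt (8*d) (3*n) with h8 | h8
  · rcases Nat.even_or_odd d with he | he
    · have he' : d % 2 = 0 := Nat.even_iff.mp he
      rw [aux_cBlueEven n d h8 he', if_pos h8, if_pos he']
      obtain ⟨h1, h2⟩ := (by omega : 8 * ((3*n/4 - d)/2) + 4*d ≤ 3*n + 24 ∧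
        3*n ≤ 8 * ((3*n/4 - d)/2) + 4*d + 24)
      have h1' : (8:ℝ) * ((3*n/4 - d)/2 : ℕ) + 4*d ≤ 3*n + 24 := by exact_mod_cast h1
      have h2' : (3:ℝ)*n ≤ 8 * ((3*n/4 - d)/2 : ℕ) + 4*d + 24 := by exact_mod_cast h2
      rw [abs_le]; constructor <;> linarith
    · have he' : d % 2 = 1 := Nat.odd_iff.mp he
      rw [aux_cBlueOdd n d h8 he', if_pos h8, if_neg (by omega)]
      simp
  · rcases Nat.even_or_odd d with he | he
    · have he' : d % 2 = 0 := Nat.even_iff.mp he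
      rw [aux_cRedEven n d h8 (by omega) he', if_neg (by omega), if_pos he']
      obtain ⟨h1, h2⟩ := (by omega : 2*((n-d+1)/2) + d ≤ n + 2 ∧ n ≤ 2*((n-d+1)/2) + d + 2)
      have h1' : (2:ℝ) * ((n-d+1)/2 : ℕ) + d ≤ n + 2 := by exact_mod_cast h1
      have h2' : (n:ℝ) ≤ 2 * ((n-d+1)/2 : ℕ) + d + 2 := by exact_mod_cast h2
      rw [abs_le]; constructor <;> linarith
    · have he' : d % 2 = 1 := Nat.odd_iff.mp he
      rw [aux_cRedOdd n d h8 (by omega) he', if_neg (by omega), if_neg (by omega)]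
      obtain ⟨h1, h2⟩ := (by omega : 8*((n-d+1)/2 - (3*n/4-d+1)/2) ≤ n + 24 ∧
        n ≤ 8*((n-d+1)/2 - (3*n/4-d+1)/2) + 24)
      have h1' : (8:ℝ) * (((n-d+1)/2 - (3*n/4-d+1)/2 : ℕ) : ℝ) ≤ n + 24 := by exact_mod_cast h1
      have h2' : (n:ℝ) ≤ 8 * (((n-d+1)/2 - (3*n/4-d+1)/2 : ℕ) : ℝ) + 24 := by exact_mod_cast h2
      rw [abs_le]; constructor <;> linarith

lemma aux_tau_sum (n : ℕ) :
    ∑ d ∈ Icc 1 (n/2), tauF n d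
      = (((n/2/2 : ℕ) : ℝ) * ((n:ℝ)/2)
          - ((n/2/2 : ℕ):ℝ) * (((n/2/2 : ℕ):ℝ) + 1) / 2
          - ((3*n/16 : ℕ):ℝ) * ((n:ℝ)/8))
        + ((((n/2+1)/2 - (3*n/8+1)/2 : ℕ)):ℝ) * ((n:ℝ)/8) := by
  rw [← Finset.sum_filter_add_sum_filter_not (Icc 1 (n/2)) (fun d => d % 2 = 0)]
  have heven : ∑ d ∈ (Icc 1 (n/2)).filter (fun d => d % 2 = 0), tauF n d
      = ((n/2/2 : ℕ) : ℝ) * ((n:ℝ)/2)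
          - ((n/2/2 : ℕ):ℝ) * (((n/2/2 : ℕ):ℝ) + 1) / 2
          - ((3*n/16 : ℕ):ℝ) * ((n:ℝ)/8) := by
    rw [aux_evenImage, Finset.sum_image (by intro a _ b _ h; simp only at h; omega)]
    have hcong : ∀ e ∈ Icc 1 (n/2/2), tauF n (2*e)
        = ((n:ℝ)/2 - e) - (if 16*e ≤ 3*n then (n:ℝ)/8 else 0) := by
      intro e _
      unfold tauF
      simp only [Nat.mul_mod_right, show (0:ℕ) = 0 from rfl, if_pos rfl,
        show 8*(2*e) ≤ 3*n ↔ 16*e ≤ 3*n from by omega]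
      split_ifs with h
      · push_cast; ring
      · push_cast; ring
    rw [Finset.sum_congr rfl hcong, Finset.sum_sub_distrib]
    have h1 : ∑ e ∈ Icc 1 (n/2/2), ((n:ℝ)/2 - e)
        = ((n/2/2 : ℕ) : ℝ) * ((n:ℝ)/2) - ((n/2/2 : ℕ):ℝ) * (((n/2/2 : ℕ):ℝ) + 1) / 2 := by
      rw [Finset.sum_sub_distrib, Finset.sum_const, aux_gaussR, Nat.card_Icc]
      simp only [nsmul_eq_mul]
      push_cast [Nat.add_sub_cancel]
      ring
    have h2 : ∑ e ∈ Icc 1 (n/2/2), (if 16*e ≤ 3*n then (n:ℝ)/8 else 0)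
        = ((3*n/16 : ℕ):ℝ) * ((n:ℝ)/8) := by
      rw [← Finset.sum_filter]
      have : (Icc 1 (n/2/2)).filter (fun e => 16*e ≤ 3*n) = Icc 1 (3*n/16) := by
        ext x; simp only [Finset.mem_filter, Finset.mem_Icc]; omega
      rw [this, Finset.sum_const, Nat.card_Icc, nsmul_eq_mul]
      push_cast [Nat.add_sub_cancel]
      ring
    rw [h1, h2]
  have hodd : ∑ d ∈ (Icc 1 (n/2)).filter (fun d => ¬ d % 2 = 0), tauF n d
      = ((((n/2+1)/2 - (3*n/8+1)/2 : ℕ)):ℝ) * ((n:ℝ)/8) := by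
    have hcong : ∀ d ∈ (Icc 1 (n/2)).filter (fun d => ¬ d % 2 = 0), tauF n d
        = (if ¬ (8*d ≤ 3*n) then (n:ℝ)/8 else 0) := by
      intro d hd
      simp only [Finset.mem_filter, Finset.mem_Icc] at hd
      unfold tauF
      split_ifs <;> simp_all
    rw [Finset.sum_congr rfl hcong, ← Finset.sum_filter, Finset.filter_filter]
    have : ((Icc 1 (n/2)).filter (fun d => ¬ d % 2 = 0 ∧ ¬ (8*d ≤ 3*n)))
        = (Icc 1 (n/2)).filter (fun x => x % 2 = 1 ∧ 3*n/8 < x) := by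
      ext x; simp only [Finset.mem_filter, Finset.mem_Icc]; omega
    rw [this, Finset.sum_const, aux_oddCountIoc _ _ (by omega), nsmul_eq_mul]
    try ring
  rw [heven, hodd]

lemma aux_tau_total (n : ℕ) :
    |(∑ d ∈ Icc 1 (n/2), tauF n d) - 5/64 * (n:ℝ)^2| ≤ 50 * (n:ℝ) := by
  rw [aux_tau_sum]
  obtain ⟨ha1, ha2⟩ := (by omega : 4*(n/2/2) ≤ n ∧ n ≤ 4*(n/2/2) + 3)
  obtain ⟨hb1, hb2⟩ := (by omega : 16*(3*n/16) ≤ 3*n ∧ 3*n ≤ 16*(3*n/16) + 15)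
  obtain ⟨hq1, hq2⟩ := (by omega : 16*((n/2+1)/2 - (3*n/8+1)/2) ≤ n + 40 ∧
      n ≤ 16*((n/2+1)/2 - (3*n/8+1)/2) + 40)
  set a : ℕ := n/2/2
  set b : ℕ := 3*n/16
  set q : ℕ := (n/2+1)/2 - (3*n/8+1)/2
  have hA1 : 4*(a:ℝ) ≤ n := by exact_mod_cast ha1
  have hA2 : (n:ℝ) ≤ 4*a + 3 := by exact_mod_cast ha2
  have hB1 : 16*(b:ℝ) ≤ 3*n := by exact_mod_cast hb1
  have hB2 : 3*(n:ℝ) ≤ 16*b + 15 := by exact_mod_cast hb2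
  have hQ1 : 16*(q:ℝ) ≤ n + 40 := by exact_mod_cast hq1
  have hQ2 : (n:ℝ) ≤ 16*q + 40 := by exact_mod_cast hq2
  have hA0 : (0:ℝ) ≤ a := Nat.cast_nonneg a
  have hN0 : (0:ℝ) ≤ n := Nat.cast_nonneg n
  rw [abs_le]
  constructor <;>
    nlinarith [mul_nonneg hA0 (by linarith : (0:ℝ) ≤ (n:ℝ) - 4*a),
      mul_nonneg hA0 (by linarith : (0:ℝ) ≤ 4*(a:ℝ) + 3 - n),
      mul_nonneg hN0 (by linarith : (0:ℝ) ≤ (n:ℝ) - 4*a),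
      mul_nonneg hN0 (by linarith : (0:ℝ) ≤ 4*(a:ℝ) + 3 - n),
      sq_nonneg ((n:ℝ) - 4*a)]

/-! ### The two main cardinality estimates -/

lemma aux_solns_card (n : ℕ) :
    (solns 2 (-2) 1 n).card = ∑ d ∈ Icc 1 (n/2), (n - d) := by
  have h := aux_card_filter_solns n (fun _ => True)
  simpa [Finset.filter_true, Nat.card_Icc] using h

lemma aux_solns_bound (n : ℕ) :
    |((solns 2 (-2) 1 n).card : ℝ) - 3/8 * (n:ℝ)^2| ≤ 2 * (n:ℝ) := by
  rw [aux_solns_card]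
  have hc : ((∑ d ∈ Icc 1 (n/2), (n - d) : ℕ) : ℝ) = ∑ d ∈ Icc 1 (n/2), ((n:ℝ) - d) := by
    rw [Nat.cast_sum]
    refine Finset.sum_congr rfl (fun d hd => ?_)
    simp only [Finset.mem_Icc] at hd
    rw [Nat.cast_sub (by omega)]
  rw [hc, Finset.sum_sub_distrib, Finset.sum_const, aux_gaussR, Nat.card_Icc,
    nsmul_eq_mul]
  obtain ⟨h1, h2⟩ := (by omega : 2*(n/2) ≤ n ∧ n ≤ 2*(n/2) + 1)
  have h1' : 2*((n/2 : ℕ):ℝ) ≤ n := by exact_mod_cast h1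
  have h2' : (n:ℝ) ≤ 2*((n/2 : ℕ):ℝ) + 1 := by exact_mod_cast h2
  have h0 : (0:ℝ) ≤ ((n/2 : ℕ):ℝ) := Nat.cast_nonneg _
  have hN0 : (0:ℝ) ≤ n := Nat.cast_nonneg n
  push_cast [Nat.add_sub_cancel]
  rw [abs_le]
  constructor <;> nlinarith

lemma aux_mono_card (n : ℕ) :
    (mono 2 (-2) 1 n (color1 n)).card = ∑ d ∈ Icc 1 (n/2), cD n d := by
  unfold mono cD
  exact aux_card_filter_solns n
    (fun p => color1 n p.1 = color1 n p.2.1 ∧ color1 n p.1 = color1 n p.2.2)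

lemma aux_mono_bound (n : ℕ) :
    |((mono 2 (-2) 1 n (color1 n)).card : ℝ) - 5/64 * (n:ℝ)^2| ≤ 53 * (n:ℝ) := by
  rw [aux_mono_card]
  have hc : ((∑ d ∈ Icc 1 (n/2), cD n d : ℕ) : ℝ) = ∑ d ∈ Icc 1 (n/2), (cD n d : ℝ) := by
    rw [Nat.cast_sum]
  have hdiff : |(∑ d ∈ Icc 1 (n/2), (cD n d : ℝ)) - ∑ d ∈ Icc 1 (n/2), tauF n d|
      ≤ 3 * (n:ℝ) := by
    rw [← Finset.sum_sub_distrib]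
    calc |∑ d ∈ Icc 1 (n/2), ((cD n d : ℝ) - tauF n d)|
        ≤ ∑ d ∈ Icc 1 (n/2), |(cD n d : ℝ) - tauF n d| :=
          Finset.abs_sum_le_sum_abs _ _
      _ ≤ ∑ d ∈ Icc 1 (n/2), 3 := by
          refine Finset.sum_le_sum (fun d hd => ?_)
          simp only [Finset.mem_Icc] at hd
          exact aux_term_bound n d hd.1 hd.2
      _ = ((n/2 : ℕ) : ℝ) * 3 := by
          rw [Finset.sum_const, Nat.card_Icc, nsmul_eq_mul]; push_cast [Nat.add_sub_cancel]; ring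
      _ ≤ 3 * (n:ℝ) := by
          have : ((n/2 : ℕ):ℝ) ≤ (n:ℝ) := by exact_mod_cast Nat.div_le_self n 2
          linarith
  have htau := aux_tau_total n
  rw [hc]
  calc |(∑ d ∈ Icc 1 (n/2), (cD n d : ℝ)) - 5/64 * (n:ℝ)^2|
      ≤ |(∑ d ∈ Icc 1 (n/2), (cD n d : ℝ)) - ∑ d ∈ Icc 1 (n/2), tauF n d|
        + |(∑ d ∈ Icc 1 (n/2), tauF n d) - 5/64 * (n:ℝ)^2| := abs_sub_le _ _ _
    _ ≤ 3 * (n:ℝ) + 50 * (n:ℝ) := add_le_add hdiff htau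
    _ = 53 * (n:ℝ) := by ring

/-! ### The limsup estimate -/

lemma aux_limsup (soln monoc : ℕ → ℕ) (muM : ℕ → ℝ)
    (hS : ∀ n : ℕ, |((soln n : ℝ)) - 3/8 * (n:ℝ)^2| ≤ 2 * (n:ℝ))
    (hM : ∀ n : ℕ, |((monoc n : ℝ)) - 5/64 * (n:ℝ)^2| ≤ 53 * (n:ℝ))
    (hmu_le : ∀ n, muM n ≤ (monoc n : ℝ) / (soln n : ℝ))
    (hmu_ge : ∀ n, 0 ≤ muM n) :
    limsup muM atTop ≤ 5/24 := by
  set r : ℕ → ℝ := fun n => (monoc n : ℝ) / (soln n : ℝ) with hr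
  have hinv : Tendsto (fun n : ℕ => ((n:ℝ))⁻¹) atTop (nhds 0) :=
    tendsto_inv_atTop_zero.comp tendsto_natCast_atTop_atTop
  have hsq : ∀ (C : ℝ) (f : ℕ → ℕ) (c : ℝ),
      (∀ n : ℕ, |((f n : ℝ)) - c * (n:ℝ)^2| ≤ C * (n:ℝ)) →
      Tendsto (fun n : ℕ => (f n : ℝ) / (n:ℝ)^2) atTop (nhds c) := by
    intro C f c hf
    have h0 : Tendsto (fun n : ℕ => C * ((n:ℝ))⁻¹) atTop (nhds 0) := by
      simpa using hinv.const_mul C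
    have hz : Tendsto (fun n : ℕ => (f n : ℝ) / (n:ℝ)^2 - c) atTop (nhds 0) := by
      refine squeeze_zero_norm' ?_ h0
      filter_upwards [eventually_ge_atTop 1] with n hn
      have hn0 : (0:ℝ) < (n:ℝ) := by exact_mod_cast hn
      have hn2 : (0:ℝ) < (n:ℝ)^2 := by positivity
      have : (f n : ℝ) / (n:ℝ)^2 - c = ((f n : ℝ) - c * (n:ℝ)^2) / (n:ℝ)^2 := by
        field_simp
      rw [Real.norm_eq_abs, this, abs_div, abs_of_pos hn2]
      rw [div_le_iff₀ hn2]
      calc |(f n : ℝ) - c * (n:ℝ)^2| ≤ C * n := hf n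
        _ = C * (n:ℝ)⁻¹ * (n:ℝ)^2 := by field_simp
    have := hz.add_const c
    simpa using this
  have hu := hsq 53 monoc (5/64) hM
  have hv := hsq 2 soln (3/8) hS
  have hdiv : Tendsto (fun n : ℕ => ((monoc n : ℝ)/(n:ℝ)^2) / ((soln n : ℝ)/(n:ℝ)^2))
      atTop (nhds ((5/64)/(3/8))) := hu.div hv (by norm_num)
  have hrt : Tendsto r atTop (nhds (5/24)) := by
    have : (5:ℝ)/24 = (5/64)/(3/8) := by norm_num
    rw [this]
    apply hdiv.congr'
    filter_upwards [eventually_ge_atTop 1] with n hn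
    have hn0 : (0:ℝ) < (n:ℝ) := by exact_mod_cast hn
    have hn2 : ((n:ℝ)^2) ≠ 0 := by positivity
    rw [hr]
    simp only
    rcases eq_or_ne ((soln n : ℝ)) 0 with h | h
    · simp [h]
    · field_simp
  calc limsup muM atTop ≤ limsup r atTop := by
        exact limsup_le_limsup (Filter.Eventually.of_forall hmu_le)
          (Filter.isCoboundedUnder_le_of_le atTop (fun n => hmu_ge n))
          hrt.isBoundedUnder_le
    _ = 5/24 := hrt.limsup_eq

theorem two_two_one_uncommon :
    (∃ K : ℝ, ∀ n : ℕ,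
      |((solns 2 (-2) 1 n).card : ℝ) - 3 / 8 * (n : ℝ) ^ 2| ≤ K * n) ∧
    (∃ K : ℝ, ∀ n : ℕ,
      |((mono 2 (-2) 1 n (color1 n)).card : ℝ) - 5 / 64 * (n : ℝ) ^ 2| ≤ K * n) ∧
    limsup (fun n => muMin 2 (-2) 1 n) atTop ≤ 5 / 24 ∧
    (5 : ℝ) / 24 < 1 / 4 := by
  have hmem : ∀ n : ℕ, ((mono 2 (-2) 1 n (color1 n)).card : ℝ) / ((solns 2 (-2) 1 n).card : ℝ)
      ∈ {r : ℝ | ∃ f : ℕ → Bool,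
        r = ((mono 2 (-2) 1 n f).card : ℝ) / ((solns 2 (-2) 1 n).card : ℝ)} :=
    fun n => ⟨color1 n, rfl⟩
  have hnonneg : ∀ n : ℕ, ∀ r ∈ {r : ℝ | ∃ f : ℕ → Bool,
      r = ((mono 2 (-2) 1 n f).card : ℝ) / ((solns 2 (-2) 1 n).card : ℝ)}, 0 ≤ r := by
    rintro n r ⟨f, rfl⟩
    positivity
  have hmu_le : ∀ n : ℕ, muMin 2 (-2) 1 n
      ≤ ((mono 2 (-2) 1 n (color1 n)).card : ℝ) / ((solns 2 (-2) 1 n).card : ℝ) :=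
    fun n => csInf_le ⟨0, fun r hr => hnonneg n r hr⟩ (hmem n)
  have hmu_ge : ∀ n : ℕ, 0 ≤ muMin 2 (-2) 1 n :=
    fun n => le_csInf ⟨_, hmem n⟩ (hnonneg n)
  refine ⟨⟨2, fun n => by simpa using aux_solns_bound n⟩,
    ⟨53, fun n => by simpa using aux_mono_bound n⟩, ?_, by norm_num⟩
  exact aux_limsup (fun n => (solns 2 (-2) 1 n).card)
    (fun n => (mono 2 (-2) 1 n (color1 n)).card) (fun n => muMin 2 (-2) 1 n)
    aux_solns_bound aux_mono_bound hmu_le hmu_ge
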